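/- For every integer k ≥ 2 there exists a unique β_k with π/2 < β_k < π such that sin^2(β_k) * h_{k-1}(β_k) = h_k(β_k), where h_k(t) = ∫_0^t sin^{2k-1}(τ) dτ. -/

import Mathlib

open Real

theorem exists_unique_beta (k : ℕ) (hk : 2 ≤ k)
    (h : ℕ → ℝ → ℝ)
    (hh : ∀ m : ℕ, ∀ t : ℝ, h m t = ∫ τ in (0:ℝ)..t, Real.sin τ ^ (2 * m - 1)) :
    ∃! β : ℝ, β ∈ Set.Ioo (Real.pi / 2) Real.pi ∧
      Real.sin β ^ 2 * h (k - 1) β = h k β := by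
  have pi_pos := Real.pi_pos
  set F : ℝ → ℝ := fun t => sin t ^ 2 * h (k - 1) t - h k t with hFdef
  -- derivative of h m
  have hder : ∀ m : ℕ, ∀ t : ℝ, HasDerivAt (h m) (sin t ^ (2 * m - 1)) t := by
    intro m t
    have hc : Continuous fun τ : ℝ => sin τ ^ (2 * m - 1) := continuous_sin.pow _
    have h2 := (hc.integral_hasStrictDerivAt 0 t).hasDerivAt
    have he : (fun u => ∫ τ in (0:ℝ)..u, sin τ ^ (2 * m - 1)) = h m := by
      funext u; rw [hh]
    rwa [he] at h2
  -- positivity of h m on (0, π]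
  have hpos : ∀ m : ℕ, ∀ t : ℝ, 0 < t → t ≤ π → 0 < h m t := by
    intro m t ht1 ht2
    rw [hh]
    apply intervalIntegral.intervalIntegral_pos_of_pos_on
    · exact (continuous_sin.pow _ : Continuous fun τ : ℝ => sin τ ^ (2 * m - 1)).intervalIntegrable 0 t
    · intro x hx
      have hs : 0 < sin x := sin_pos_of_pos_of_lt_pi hx.1 (lt_of_lt_of_le hx.2 ht2)
      positivity
    · exact ht1
  -- derivative of F
  have hFder : ∀ t : ℝ, HasDerivAt F (2 * sin t * cos t * h (k - 1) t) t := by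
    intro t
    have h1 := hder (k - 1) t
    have h2 := hder k t
    have hs : HasDerivAt (fun t => sin t ^ 2) ((2 : ℕ) * sin t ^ (2 - 1) * cos t) t :=
      (hasDerivAt_sin t).pow 2
    have hmain := (hs.mul h1).sub h2
    have e2 : sin t ^ 2 * sin t ^ (2 * (k - 1) - 1) = sin t ^ (2 * k - 1) := by
      rw [← pow_add]; congr 1; omega
    have hmain' : HasDerivAt F _ t := hmain
    convert hmain' using 1
    push_cast
    rw [mul_comm (sin t ^ 2)] at e2
    nlinarith [e2]
  have hFcont : Continuous F := by
    have : Differentiable ℝ F := fun t => (hFder t).differentiableAt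
    exact this.continuous
  -- strict anti on Icc (π/2) π
  have hanti : StrictAntiOn F (Set.Icc (π / 2) π) := by
    apply strictAntiOn_of_deriv_neg (convex_Icc _ _) hFcont.continuousOn
    intro x hx
    rw [interior_Icc] at hx
    rw [(hFder x).deriv]
    have hsin : 0 < sin x := sin_pos_of_pos_of_lt_pi (by linarith [hx.1]) hx.2
    have hcos : cos x < 0 := cos_neg_of_pi_div_two_lt_of_lt hx.1 (by linarith [hx.2])
    have hhp : 0 < h (k - 1) x := hpos _ x (by linarith [hx.1]) hx.2.le
    have : 2 * sin x * h (k - 1) x * cos x < 0 :=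
      mul_neg_of_pos_of_neg (by positivity) hcos
    nlinarith
  -- F (π/2) > 0
  have hFa : 0 < F (π / 2) := by
    have hsub : F (π / 2) =
        ∫ τ in (0:ℝ)..(π / 2), (sin τ ^ (2 * (k - 1) - 1) - sin τ ^ (2 * k - 1)) := by
      rw [hFdef]
      simp only [sin_pi_div_two, one_pow, one_mul, hh]
      exact (intervalIntegral.integral_sub
        ((continuous_sin.pow _).intervalIntegrable _ _)
        ((continuous_sin.pow _).intervalIntegrable _ _)).symm
    rw [hsub]
    apply intervalIntegral.intervalIntegral_pos_of_pos_on
    · exact ((continuous_sin.pow _).sub (continuous_sin.pow _)).intervalIntegrable 0 _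
    · intro x hx
      have hs : 0 < sin x := sin_pos_of_pos_of_lt_pi hx.1 (by linarith [hx.2])
      have hcos : 0 < cos x := cos_pos_of_mem_Ioo ⟨by linarith [hx.1], hx.2⟩
      have hs1 : sin x < 1 := by
        nlinarith [sin_sq_add_cos_sq x]
      have := pow_lt_pow_right_of_lt_one₀ hs hs1 (show 2 * (k - 1) - 1 < 2 * k - 1 by omega)
      linarith
    · linarith
  -- F π < 0
  have hFb : F π < 0 := by
    have : F π = - h k π := by rw [hFdef]; simp [Real.sin_pi]
    rw [this]
    have := hpos k π pi_pos le_rfl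
    linarith
  -- existence from IVT
  have hmem : (0:ℝ) ∈ Set.Ioo (F π) (F (π / 2)) := ⟨hFb, hFa⟩
  have hivt := intermediate_value_Ioo' (by linarith : π / 2 ≤ π) hFcont.continuousOn hmem
  obtain ⟨β, hβmem, hβ0⟩ := hivt
  refine ⟨β, ⟨hβmem, ?_⟩, ?_⟩
  · have : sin β ^ 2 * h (k - 1) β - h k β = 0 := hβ0
    linarith
  · rintro γ ⟨hγmem, hγeq⟩
    have hγ0 : F γ = 0 := show sin γ ^ 2 * h (k - 1) γ - h k γ = 0 by linarith
    have hβ0' : F β = 0 := hβ0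
    have h1 : γ ∈ Set.Icc (π / 2) π := ⟨hγmem.1.le, hγmem.2.le⟩
    have h2 : β ∈ Set.Icc (π / 2) π := ⟨hβmem.1.le, hβmem.2.le⟩
    exact hanti.injOn h1 h2 (by rw [hγ0, hβ0'])
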